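/- If C = (1, c_2, ..., c_n) is an orderly coin system, then for all i with 2 ≤ i ≤ n, c_i - c_{i-1} ≥ c_2 - 1 (where c_1 = 1). -/

import Mathlib

/-- The largest coin value in `C` that is at most `v` (or 0 if none). -/
def coinMax (C : List ℕ) (v : ℕ) : ℕ := (C.filter (· ≤ v)).foldr max 0

/-- Fuelled greedy coin count. -/
def grdAux (C : List ℕ) : ℕ → ℕ → ℕ
  | 0, _ => 0
  | fuel + 1, v =>
    let c := coinMax C v
    if v = 0 ∨ c = 0 then 0 else 1 + grdAux C fuel (v - c)

/-- Number of coins used by the greedy algorithm to represent `v` with coin system `C`. -/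
def grd (C : List ℕ) (v : ℕ) : ℕ := grdAux C v v

/-- The set of sizes of representations of `v` as nonnegative integer combinations of
the coin values in `C`. -/
def reprCosts (C : List ℕ) (v : ℕ) : Set ℕ :=
  {k | ∃ x : List ℕ, x.length = C.length ∧ (List.zipWith (· * ·) x C).sum = v ∧ x.sum = k}

/-- Minimum number of coins needed to represent `v` with coin system `C`. -/
noncomputable def opt (C : List ℕ) (v : ℕ) : ℕ := sInf (reprCosts C v)

/-- A coin system is orderly if greedy is optimal for every positive value. -/
def Orderly (C : List ℕ) : Prop := ∀ v : ℕ, 0 < v → grd C v = opt C v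

namespace Stmt9Aux

lemma foldr_max_mem (l : List ℕ) : l.foldr max 0 = 0 ∨ l.foldr max 0 ∈ l := by
  induction l with
  | nil => left; rfl
  | cons a t ih =>
    simp only [List.foldr_cons]
    rcases max_choice a (t.foldr max 0) with h | h
    · right; rw [h]; exact List.mem_cons_self
    · rw [h]
      rcases ih with h0 | hm
      · left; exact h0
      · right; exact List.mem_cons_of_mem a hm

lemma le_foldr_max {l : List ℕ} {x : ℕ} (hx : x ∈ l) : x ≤ l.foldr max 0 := by
  induction l with
  | nil => cases hx
  | cons a t ih =>
    simp only [List.foldr_cons]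
    rcases List.mem_cons.mp hx with rfl | h
    · exact le_max_left _ _
    · exact le_trans (ih h) (le_max_right _ _)

lemma foldr_max_le {l : List ℕ} {m : ℕ} (h : ∀ x ∈ l, x ≤ m) : l.foldr max 0 ≤ m := by
  induction l with
  | nil => exact Nat.zero_le m
  | cons a t ih =>
    simp only [List.foldr_cons]
    exact max_le (h a List.mem_cons_self) (ih fun x hx => h x (List.mem_cons_of_mem a hx))

section WithC

variable {C : List ℕ}

lemma cm_ge {x v : ℕ} (hx : x ∈ C) (hxv : x ≤ v) : x ≤ coinMax C v :=
  le_foldr_max (List.mem_filter.mpr ⟨hx, by simpa using hxv⟩)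

lemma cm_le (v : ℕ) : coinMax C v ≤ v :=
  foldr_max_le fun x hx => by simpa using (List.of_mem_filter hx)

lemma cm_one {v : ℕ} (h1 : (1:ℕ) ∈ C) (hv : 1 ≤ v) : 1 ≤ coinMax C v := cm_ge h1 hv

lemma cm_mem {v : ℕ} (h1 : (1:ℕ) ∈ C) (hv : 1 ≤ v) : coinMax C v ∈ C := by
  rcases foldr_max_mem (C.filter (· ≤ v)) with h0 | hm
  · exfalso; have := cm_one h1 hv; rw [coinMax] at this; omega
  · exact List.mem_of_mem_filter hm

lemma cm_eq {Y v : ℕ} (hY : Y ∈ C) (hYv : Y ≤ v) (hmax : ∀ x ∈ C, x ≤ v → x ≤ Y) :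
    coinMax C v = Y := by
  refine le_antisymm (foldr_max_le fun x hx => ?_) (cm_ge hY hYv)
  have hxC := List.mem_of_mem_filter hx
  have hxv : x ≤ v := by simpa using List.of_mem_filter hx
  exact hmax x hxC hxv

lemma grdAux_zero (f : ℕ) : grdAux C f 0 = 0 := by
  cases f with
  | zero => rfl
  | succ n => simp [grdAux]

lemma grdAux_congr (h1 : (1:ℕ) ∈ C) :
    ∀ v f₁ f₂, v ≤ f₁ → v ≤ f₂ → grdAux C f₁ v = grdAux C f₂ v := by
  intro v
  induction v using Nat.strong_induction_on with
  | _ v ih =>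
    intro f₁ f₂ hf₁ hf₂
    rcases Nat.eq_zero_or_pos v with rfl | hv
    · rw [grdAux_zero, grdAux_zero]
    obtain ⟨a, rfl⟩ : ∃ a, f₁ = a + 1 := ⟨f₁ - 1, by omega⟩
    obtain ⟨b, rfl⟩ : ∃ b, f₂ = b + 1 := ⟨f₂ - 1, by omega⟩
    have hcm := cm_one h1 hv
    have hcmle := cm_le (C := C) v
    simp only [grdAux]
    have hcond : ¬(v = 0 ∨ coinMax C v = 0) := by omega
    rw [if_neg hcond, if_neg hcond]
    have hlt : v - coinMax C v < v := by omega
    rw [ih _ hlt (a) (v - coinMax C v) (by omega) (by omega),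
        ih _ hlt (v - coinMax C v) (b) (by omega) (by omega)]

lemma grd_succ (h1 : (1:ℕ) ∈ C) {v : ℕ} (hv : 1 ≤ v) :
    grd C v = 1 + grd C (v - coinMax C v) := by
  have hcm := cm_one h1 hv
  have hcmle := cm_le (C := C) v
  obtain ⟨w, rfl⟩ : ∃ w, v = w + 1 := ⟨v - 1, by omega⟩
  show grdAux C (w + 1) (w + 1) = 1 + grd C (w + 1 - coinMax C (w + 1))
  simp only [grdAux]
  have hcond : ¬(w + 1 = 0 ∨ coinMax C (w + 1) = 0) := by omega
  rw [if_neg hcond]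
  congr 1
  exact grdAux_congr h1 _ _ _ (by omega) (le_refl _)

lemma grd_pos (h1 : (1:ℕ) ∈ C) {v : ℕ} (hv : 1 ≤ v) : 1 ≤ grd C v := by
  rw [grd_succ h1 hv]; omega

lemma grd_le_one (h1 : (1:ℕ) ∈ C) {v : ℕ} (h : grd C v ≤ 1) : v = 0 ∨ v ∈ C := by
  rcases Nat.eq_zero_or_pos v with rfl | hv
  · left; rfl
  right
  rw [grd_succ h1 hv] at h
  have h0 : grd C (v - coinMax C v) = 0 := by omega
  have : v - coinMax C v = 0 := by
    by_contra hne
    have := grd_pos h1 (v := v - coinMax C v) (by omega)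
    omega
  have hcmle := cm_le (C := C) v
  have hveq : v = coinMax C v := by omega
  rw [hveq]
  exact cm_mem h1 hv

lemma zero_mul_rep : ∀ (C : List ℕ),
    (List.zipWith (· * ·) (List.replicate C.length 0) C).sum = 0 := by
  intro C
  induction C with
  | nil => rfl
  | cons a t ih =>
    rw [show (List.replicate (a :: t).length 0) = 0 :: List.replicate t.length 0 from rfl]
    simpa using ih

lemma single_rep {s : ℕ} (hs : s ∈ C) : 1 ∈ reprCosts C s := by
  induction C with
  | nil => cases hs
  | cons a t ih =>
    rcases List.mem_cons.mp hs with rfl | h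
    · exact ⟨1 :: List.replicate t.length 0, by simp, by simpa using zero_mul_rep t, by simp⟩
    · obtain ⟨x, hlen, hval, hsum⟩ := ih h
      exact ⟨0 :: x, by simp [hlen], by simpa using hval, by simpa using hsum⟩

lemma zip_mul_add : ∀ (C x y : List ℕ), x.length = C.length → y.length = C.length →
    (List.zipWith (· * ·) (List.zipWith (· + ·) x y) C).sum
      = (List.zipWith (· * ·) x C).sum + (List.zipWith (· * ·) y C).sum := by
  intro C
  induction C with
  | nil => intro x y _ _; simp
  | cons a t ih =>
    intro x y hx hy
    match x, y with
    | x0 :: xs, y0 :: ys =>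
      simp only [List.zipWith_cons_cons, List.sum_cons]
      rw [ih xs ys (by simpa using hx) (by simpa using hy)]
      ring

lemma zip_add_sum : ∀ (x y : List ℕ), x.length = y.length →
    (List.zipWith (· + ·) x y).sum = x.sum + y.sum := by
  intro x
  induction x with
  | nil =>
    intro y h
    have : y = [] := List.eq_nil_of_length_eq_zero (by simpa using h.symm)
    subst this; rfl
  | cons a t ih =>
    intro y h
    match y with
    | y0 :: ys =>
      simp only [List.zipWith_cons_cons, List.sum_cons]
      rw [ih ys (by simpa using h)]
      ring

lemma add_rep {k k' v v' : ℕ} (h : k ∈ reprCosts C v) (h' : k' ∈ reprCosts C v') :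
    (k + k') ∈ reprCosts C (v + v') := by
  obtain ⟨x, hlen, hval, hsum⟩ := h
  obtain ⟨y, hlen', hval', hsum'⟩ := h'
  refine ⟨List.zipWith (· + ·) x y, ?_, ?_, ?_⟩
  · rw [List.length_zipWith]; omega
  · rw [zip_mul_add C x y hlen hlen', hval, hval']
  · rw [zip_add_sum x y (by omega), hsum, hsum']

lemma opt_le_two {s t : ℕ} (hs : s ∈ C) (ht : t ∈ C) : opt C (s + t) ≤ 2 :=
  Nat.sInf_le (add_rep (single_rep hs) (single_rep ht))

lemma coin_sum_pos (h1 : (1:ℕ) ∈ C) (hpos : ∀ x ∈ C, 1 ≤ x) {s t : ℕ}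
    (hs : s ∈ C) (ht : t ∈ C) : 0 < s + t := by
  have := hpos s hs; omega

/-- The key consequence of orderliness: for any two coins, subtracting the greedy coin
from their sum leaves a coin or zero. -/
lemma rule (h1 : (1:ℕ) ∈ C) (hpos : ∀ x ∈ C, 1 ≤ x) (hord : Orderly C) {s t : ℕ}
    (hs : s ∈ C) (ht : t ∈ C) :
    s + t - coinMax C (s + t) = 0 ∨ s + t - coinMax C (s + t) ∈ C := by
  have hvpos := coin_sum_pos h1 hpos hs ht
  have h2 : grd C (s + t) ≤ 2 := by
    rw [hord (s + t) hvpos]; exact opt_le_two hs ht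
  rw [grd_succ h1 hvpos] at h2
  exact grd_le_one h1 (by omega)

end WithC

end Stmt9Aux

theorem stmt_9 (C : List ℕ) (hchain : List.Chain' (· < ·) C)
    (hhead : C.getD 0 0 = 1) (hord : Orderly C) :
    ∀ i : ℕ, 2 ≤ i → i ≤ C.length →
      C.getD 1 0 - 1 ≤ C.getD (i - 1) 0 - C.getD (i - 2) 0 := by
  intro i h2i hin
  classical
  have hn : 2 ≤ C.length := le_trans h2i hin
  have hpw : C.Pairwise (· < ·) := List.isChain_iff_pairwise.mp hchain
  have hlen0 : 0 < C.length := by omega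
  have hlen1 : 1 < C.length := by omega
  have hidx1 : i - 1 < C.length := by omega
  have hidx2 : i - 2 < C.length := by omega
  have hgetD : ∀ (k : ℕ) (hk : k < C.length), C.getD k 0 = C[k] := by
    intro k hk
    rw [List.getD_eq_getElem?_getD, List.getElem?_eq_getElem hk]
    rfl
  have hsorted : ∀ (j k : ℕ) (hj : j < C.length) (hk : k < C.length), j < k → C[j] < C[k] := by
    intro j k hj hk hjk
    have := List.pairwise_iff_get.mp hpw ⟨j, hj⟩ ⟨k, hk⟩ (by exact hjk)
    simpa using this
  have h01 : C[0] = 1 := by rw [← hgetD 0 hlen0]; exact hhead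
  have hone : (1:ℕ) ∈ C := by rw [← h01]; exact List.getElem_mem hlen0
  set c := C.getD 1 0 with hcdef
  have hc1 : c = C[1] := hgetD 1 hlen1
  have hcmem : c ∈ C := by rw [hc1]; exact List.getElem_mem hlen1
  have hc2 : 2 ≤ c := by
    have := hsorted 0 1 hlen0 hlen1 (by omega)
    omega
  have hF0 : ∀ x ∈ C, x = 1 ∨ c ≤ x := by
    intro x hx
    obtain ⟨⟨j, hj⟩, hxeq⟩ := List.mem_iff_get.mp hx
    have hxeq' : C[j] = x := by simpa using hxeq
    rcases Nat.eq_zero_or_pos j with rfl | hjpos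
    · left; omega
    · right
      rcases eq_or_lt_of_le (show 1 ≤ j by omega) with h1 | h1
    
      · have : j = 1 := by omega
        subst this; omega
      · have := hsorted 1 j hlen1 hj h1
        omega
  have hpos : ∀ x ∈ C, 1 ≤ x := by
    intro x hx
    rcases hF0 x hx with h | h <;> omega
  set A := C.getD (i - 2) 0 with hAdef
  set B := C.getD (i - 1) 0 with hBdef
  have hAeq : A = C[i-2] := hgetD _ hidx2
  have hBeq : B = C[i-1] := hgetD _ hidx1
  have hAmem : A ∈ C := by rw [hAeq]; exact List.getElem_mem hidx2
  have hBmem : B ∈ C := by rw [hBeq]; exact List.getElem_mem hidx1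
  have hABlt : A < B := by
    rw [hAeq, hBeq]; exact hsorted _ _ hidx2 hidx1 (by omega)
  by_contra hcon
  push_neg at hcon
  have hc3 : 3 ≤ c := by omega
  -- the set of upper ends of violating pairs
  set V : Set ℕ := {y | y ∈ C ∧ ∃ x, x ∈ C ∧ x < y ∧ y - x ≤ c - 2} with hVdef
  have hVne : V.Nonempty := ⟨B, hBmem, A, hAmem, hABlt, by omega⟩
  obtain ⟨hbC, p, hpC, hpb, hgap⟩ := Nat.sInf_mem hVne
  set b := sInf V with hbdef
  have hbmin : ∀ y ∈ V, b ≤ y := fun y hy => Nat.sInf_le hy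
  have hF2 : ∀ x x', x ∈ C → x' ∈ C → x < x' → x' < b → c - 1 ≤ x' - x := by
    intro x x' hx hx' hlt hx'b
    by_contra h; push_neg at h
    have : x' ∈ V := ⟨hx', x, hx, hlt, by omega⟩
    have := hbmin x' this
    omega
  have hpc : c ≤ p := by
    rcases hF0 p hpC with h1 | h
    · exfalso
      rcases hF0 b hbC with hb1 | hbc
      · omega
      · omega
    · exact h
  have hbc1 : c + 1 ≤ b := by omega
  have RULE := fun {s t : ℕ} (hs : s ∈ C) (ht : t ∈ C) =>
    Stmt9Aux.rule hone hpos hord hs ht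
  have main : ∀ Y, Y ∈ C → b ≤ Y → (∀ x ∈ C, Y < x → Y + b - 1 ≤ x) → False := by
    intro Y
    induction Y using Nat.strong_induction_on with
    | _ Y ih =>
      intro hYC hbY hST
      rcases eq_or_lt_of_le hbY with heq | hbY'
      · -- bottom case: Y = b, kill at 2p
        subst heq
        have hcm : coinMax C (p + p) = b := by
          apply Stmt9Aux.cm_eq hbC (by omega)
          intro x hx hxle
          by_contra hgt; push_neg at hgt
          have := hST x hx hgt
          omega
        have hr := RULE hpC hpC
        rw [hcm] at hr
        rcases hr with h0 | hmem
        · omega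
        · have := hF2 _ _ hmem hpC (by omega) (by omega)
          omega
      · -- b < Y
        have hp3 : 3 ≤ p := by omega
        have hY1p : 1 ≤ Y + 1 - p := by omega
        have huC : coinMax C (Y + 1 - p) ∈ C := Stmt9Aux.cm_mem hone hY1p
        set u := coinMax C (Y + 1 - p) with hudef
        have hule : u ≤ Y + 1 - p := Stmt9Aux.cm_le _
        have humax : ∀ x ∈ C, x ≤ Y + 1 - p → x ≤ u := fun x hx hxle => Stmt9Aux.cm_ge hx hxle
        have huY : u < Y := by omega
        set U : Set ℕ := {x | x ∈ C ∧ u < x} with hUdef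
        have hUne : U.Nonempty := ⟨Y, hYC, huY⟩
        obtain ⟨hu'C, huu'⟩ := Nat.sInf_mem hUne
        set u' := sInf U with hu'def
        have hu'min : ∀ x ∈ C, u < x → u' ≤ x := fun x hx h => Nat.sInf_le ⟨hx, h⟩
        have hu'Y : u' ≤ Y := hu'min Y hYC huY
        have hu'p : Y + 2 ≤ u' + p := by
          by_contra h; push_neg at h
          have h2 : u' ≤ Y + 1 - p := by omega
          have := humax u' hu'C h2
          omega
        have hub : u + b ≤ Y + 1 := by
          by_contra h; push_neg at h
          have hcm : coinMax C (u + b) = Y := by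
            apply Stmt9Aux.cm_eq hYC (by omega)
            intro x hx hxle
            by_contra hgt; push_neg at hgt
            have := hST x hx hgt
            omega
          have hr := RULE huC hbC
          rw [hudef] at hr
          rw [hcm] at hr
          rcases hr with h0 | hmem
          · omega
          · rcases hF0 _ hmem with h1 | hcle
            · omega
            · omega
        by_cases hcase : u' = Y
        · have hbu : b ≤ u := by
            by_contra h; push_neg at h
            have := hu'min b hbC h
            omega
          exact ih u huY huC hbu (by
            intro x hx hxu
            have h1 := hu'min x hx hxu
            omega)
        · have hu'Y' : u' < Y := lt_of_le_of_ne hu'Y hcase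
          have hcmp : coinMax C (u' + p) = Y := by
            apply Stmt9Aux.cm_eq hYC (by omega)
            intro x hx hxle
            by_contra hgt; push_neg at hgt
            have := hST x hx hgt
            omega
          have hr := RULE hu'C hpC
          rw [hcmp] at hr
          have hrC : u' + p - Y ∈ C := by
            rcases hr with h0 | hm
            · omega
            · exact hm
          by_cases hY1 : u' + 1 = Y
          · have hrw : u' + p - Y = p - 1 := by omega
            rw [hrw] at hrC
            have := hF2 _ _ hrC hpC (by omega) (by omega)
            omega
          · have hcmb : coinMax C (u' + b) = Y := by
              apply Stmt9Aux.cm_eq hYC (by omega)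
              intro x hx hxle
              by_contra hgt; push_neg at hgt
              have := hST x hx hgt
              omega
            have hrb := RULE hu'C hbC
            rw [hcmb] at hrb
            have hrbC : u' + b - Y ∈ C := by
              rcases hrb with h0 | hm
              · omega
              · exact hm
            have := hF2 _ _ hrC hrbC (by omega) (by omega)
            omega
  have hLmem : C.foldr max 0 ∈ C := by
    rcases Stmt9Aux.foldr_max_mem C with h0 | hm
    · exfalso
      have := Stmt9Aux.le_foldr_max hone
      omega
    · exact hm
  exact main (C.foldr max 0) hLmem (Stmt9Aux.le_foldr_max hbC)
    (fun x hx hgt => absurd (Stmt9Aux.le_foldr_max hx) (by omega))
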